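/- For a fixed integer c ≥ 2, the function LL_c is monotonically increasing on [1, ∞), where LL_c(x) = C(q, c−1) with q the unique real number q ≥ c satisfying C(q, c) = x, and C(y,i) = y(y−1)⋯(y−i+1)/i! for real y ≥ i. -/
import Mathlib


/-- The generalized binomial coefficient `C(y, i) = y(y-1)⋯(y-i+1)/i!` for real `y`. -/
noncomputable def realChoose (y : ℝ) (i : ℕ) : ℝ :=
  (∏ j ∈ Finset.range i, (y - j)) / (Nat.factorial i)

lemma realChoose_mono {q q' : ℝ} {i : ℕ} (hq : (i : ℝ) ≤ q) (h : q ≤ q') :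
    realChoose q i ≤ realChoose q' i := by
  unfold realChoose
  apply div_le_div_of_nonneg_right ?_ (by positivity)
  · exact Finset.prod_le_prod
      (fun j hj => by
        have : (j : ℝ) < i := by exact_mod_cast Finset.mem_range.mp hj
        linarith)
      (fun j _ => by linarith)

lemma realChoose_strict {q q' : ℝ} {i : ℕ} (hi : 1 ≤ i) (hq : (i : ℝ) ≤ q)
    (h : q < q') : realChoose q i < realChoose q' i := by
  unfold realChoose
  apply div_lt_div_of_pos_right ?_ (by positivity)
  · apply Finset.prod_lt_prod_of_nonempty
    · intro j hj
      have : (j : ℝ) < i := by exact_mod_cast Finset.mem_range.mp hj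
      linarith
    · intro j _; linarith
    · exact Finset.nonempty_range_iff.mpr (by omega)

theorem stmt_10 (c : ℕ) (hc : 2 ≤ c) (x₁ x₂ q₁ q₂ : ℝ)
    (hx₁ : 1 ≤ x₁) (hx₂ : 1 ≤ x₂) (hx : x₁ ≤ x₂)
    (hq₁ : (c : ℝ) ≤ q₁) (hq₂ : (c : ℝ) ≤ q₂)
    (hq₁x : realChoose q₁ c = x₁) (hq₂x : realChoose q₂ c = x₂) :
    realChoose q₁ (c - 1) ≤ realChoose q₂ (c - 1) := by
  have hqq : q₁ ≤ q₂ := by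
    by_contra h
    push_neg at h
    have := realChoose_strict (by omega) hq₂ h
    rw [hq₁x, hq₂x] at this
    linarith
  have hcast : ((c - 1 : ℕ) : ℝ) ≤ q₁ := by
    have : ((c - 1 : ℕ) : ℝ) ≤ (c : ℝ) := by exact_mod_cast Nat.sub_le c 1
    linarith
  exact realChoose_mono hcast hqq
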